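/- Let σ̂ : ℝ → ℝ₊ be a smile in strike with σ̂(k)√T = a₀ + a₁k + o(k) as k → 0, where a₀ > 0, and suppose the map k ↦ δ(k) = N(d1(k,σ̂(k))) is a differentiable bijection near 0. Then the delta smile σ(δ) = σ̂(k(δ)) satisfies σ(δ)√T = a₀ - (2a₀a₁/(n(a₀/2)(2-a₀a₁)))(δ - δ(0)) + o(δ - δ(0)), where δ(0) = N(a₀/2) and n is the standard Gaussian density, provided a₀a₁ ≠ 2. -/

import Mathlib

open Real Filter Set MeasureTheory Asymptotics

/-- Standard Gaussian CDF. -/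
noncomputable def stdN (x : ℝ) : ℝ :=
  (Real.sqrt (2 * Real.pi))⁻¹ * ∫ t in Set.Iic x, Real.exp (-t ^ 2 / 2)

/-- Standard Gaussian density. -/
noncomputable def stdn (x : ℝ) : ℝ :=
  (Real.sqrt (2 * Real.pi))⁻¹ * Real.exp (-x ^ 2 / 2)

/-- Inverse of the standard Gaussian CDF. -/
noncomputable def Ninv : ℝ → ℝ := Function.invFun stdN

/-- Black-Scholes d1. -/
noncomputable def d1 (T k σ : ℝ) : ℝ := -k / (σ * Real.sqrt T) + σ * Real.sqrt T / 2

/-- Black-Scholes d2. -/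
noncomputable def d2 (T k σ : ℝ) : ℝ := -k / (σ * Real.sqrt T) - σ * Real.sqrt T / 2

lemma integrable_gauss : Integrable (fun t : ℝ => Real.exp (-t ^ 2 / 2)) := by
  have := integrable_exp_neg_mul_sq (b := 1/2) (by norm_num)
  exact this.congr (Filter.Eventually.of_forall (fun t => by ring_nf))

lemma hasDerivAt_stdN (x : ℝ) : HasDerivAt stdN (stdn x) x := by
  have hcont : Continuous (fun t : ℝ => Real.exp (-t ^ 2 / 2)) := by continuity
  have hfun : stdN = fun x => (Real.sqrt (2 * Real.pi))⁻¹ *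
      ((∫ t in Set.Iic (0:ℝ), Real.exp (-t ^ 2 / 2)) +
        ∫ t in (0:ℝ)..x, Real.exp (-t ^ 2 / 2)) := by
    funext y
    rw [stdN, ← intervalIntegral.integral_Iic_sub_Iic integrable_gauss.integrableOn
      integrable_gauss.integrableOn]
    ring
  have hI : HasDerivAt (fun u => ∫ t in (0:ℝ)..u, Real.exp (-t ^ 2 / 2))
      (Real.exp (-x ^ 2 / 2)) x :=
    intervalIntegral.integral_hasDerivAt_right
      (integrable_gauss.intervalIntegrable)
      hcont.aestronglyMeasurable.stronglyMeasurableAtFilter hcont.continuousAt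
  rw [hfun]
  simpa [stdn, mul_comm] using ((hI.const_add _).const_mul (Real.sqrt (2 * Real.pi))⁻¹)

lemma stdn_pos (x : ℝ) : 0 < stdn x := by
  have : (0:ℝ) < Real.sqrt (2 * Real.pi) :=
    Real.sqrt_pos.2 (by positivity)
  exact mul_pos (inv_pos.2 this) (Real.exp_pos _)

theorem atm_first_order_expansion (T : ℝ) (hT : 0 < T)
    (σhat : ℝ → ℝ) (hpos : ∀ k, 0 < σhat k)
    (a₀ a₁ : ℝ) (ha₀ : 0 < a₀) (hne : a₀ * a₁ ≠ 2)
    -- σ̂(k)√T = a₀ + a₁ k + o(k) as k → 0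
    (hexp : (fun k => σhat k * Real.sqrt T - (a₀ + a₁ * k)) =o[nhds 0] (fun k => k))
    (δf kf : ℝ → ℝ)
    (hδf : ∀ k, δf k = stdN (d1 T k (σhat k)))
    (hdiff : DifferentiableAt ℝ δf 0)
    (hinv₁ : ∀ᶠ k in nhds 0, kf (δf k) = k)
    (hinv₂ : ∀ᶠ δ in nhds (stdN (a₀ / 2)), δf (kf δ) = δ)
    (hkfcont : ContinuousAt kf (stdN (a₀ / 2))) :
    (fun δ => σhat (kf δ) * Real.sqrt T -
        (a₀ - (2 * a₀ * a₁ / (stdn (a₀ / 2) * (2 - a₀ * a₁))) * (δ - stdN (a₀ / 2))))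
      =o[nhds (stdN (a₀ / 2))] (fun δ => δ - stdN (a₀ / 2)) := by
  set s : ℝ → ℝ := fun k => σhat k * Real.sqrt T with hs
  have hsT : (0:ℝ) < Real.sqrt T := Real.sqrt_pos.2 hT
  have hsk : ∀ k, 0 < s k := fun k => mul_pos (hpos k) hsT
  -- s 0 = a₀
  have hs0 : s 0 = a₀ := by
    have h0 : s 0 - (a₀ + a₁ * 0) = 0 := by
      have := (hexp.def one_pos).self_of_nhds
      simpa using this
    linarith [h0]
  -- s tends to a₀
  have hstend : Filter.Tendsto s (nhds 0) (nhds a₀) := by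
    have h1 : Filter.Tendsto (fun k => s k - (a₀ + a₁ * k)) (nhds 0) (nhds 0) :=
      hexp.isBigO.trans_tendsto (by exact Filter.tendsto_id (α := ℝ))
    have h2 : Filter.Tendsto (fun k : ℝ => a₀ + a₁ * k) (nhds 0) (nhds a₀) := by
      have : Filter.Tendsto (fun k : ℝ => a₀ + a₁ * k) (nhds 0) (nhds (a₀ + a₁ * 0)) :=
        ((continuous_const.add (continuous_const.mul continuous_id)).tendsto 0)
      simpa using this
    simpa using h1.add h2
  -- the d1 composition g
  set g : ℝ → ℝ := fun k => d1 T k (σhat k) with hg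
  have hgdef : ∀ k, g k = -k / s k + s k / 2 := fun k => rfl
  have hg0 : g 0 = a₀ / 2 := by
    rw [hgdef, hs0]; ring
  set b : ℝ := a₁ / 2 - 1 / a₀ with hb
  -- g has derivative b at 0
  have hgd : HasDerivAt g b 0 := by
    rw [hasDerivAt_iff_isLittleO]
    have key : (fun k => g k - g 0 - (k - 0) • b) =
        (fun k => (-k / s k + k / a₀) + (1/2) * (s k - (a₀ + a₁ * k))) := by
      funext k
      rw [hgdef, hg0]
      simp only [smul_eq_mul, sub_zero]
      ring
    rw [key]
    have hA : (fun k => -k / s k + k / a₀) =o[nhds 0] (fun k : ℝ => k) := by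
      have heq : (fun k => -k / s k + k / a₀) =
          fun k => k * ((s k - a₀) / (s k * a₀)) := by
        funext k
        have h1 : s k ≠ 0 := (hsk k).ne'
        have h2 : a₀ ≠ 0 := ha₀.ne'
        field_simp
        try ring
      rw [heq]
      have hφ : Filter.Tendsto (fun k => (s k - a₀) / (s k * a₀)) (nhds 0) (nhds 0) := by
        have hnum : Filter.Tendsto (fun k => s k - a₀) (nhds 0) (nhds 0) := by
          have := hstend.sub (tendsto_const_nhds (x := a₀) (f := nhds (0:ℝ)))
          simpa using this
        have hden : Filter.Tendsto (fun k => s k * a₀) (nhds 0) (nhds (a₀ * a₀)) :=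
          hstend.mul tendsto_const_nhds
        have := hnum.div hden (by positivity)
        rw [zero_div] at this; exact this
      have hφo : (fun k => (s k - a₀) / (s k * a₀)) =o[nhds 0] (fun _ : ℝ => (1:ℝ)) :=
        (isLittleO_one_iff ℝ).2 hφ
      have := (isBigO_refl (fun k : ℝ => k) (nhds 0)).mul_isLittleO hφo
      simpa using this
    have hB : (fun k => (1/2 : ℝ) * (s k - (a₀ + a₁ * k))) =o[nhds 0] (fun k : ℝ => k) :=
      hexp.const_mul_left _
    simpa using hA.add hB
  -- δf has derivative c at 0
  set c : ℝ := stdn (a₀ / 2) * b with hc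
  have hδfd : HasDerivAt δf c 0 := by
    have : HasDerivAt (fun k => stdN (g k)) (stdn (a₀/2) * b) 0 := by
      have := (hasDerivAt_stdN (g 0)).comp 0 hgd
      rw [hg0] at this
      exact this
    have heq : δf = fun k => stdN (g k) := funext fun k => hδf k
    rw [heq]; exact this
  have hcne : c ≠ 0 := by
    have hb' : b ≠ 0 := by
      intro h
      apply hne
      rw [hb] at h
      field_simp at h
      try linarith
    exact mul_ne_zero (stdn_pos _).ne' hb'
  -- δf 0 = δ₀
  have hδf0 : δf 0 = stdN (a₀ / 2) := by
    rw [hδf 0]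
    exact congrArg stdN hg0
  -- kf δ₀ = 0
  have hkf0 : kf (stdN (a₀ / 2)) = 0 := by
    have := hinv₁.self_of_nhds
    simpa [hδf0] using this
  -- kf has derivative c⁻¹ at δ₀
  have hkfd : HasDerivAt kf c⁻¹ (stdN (a₀ / 2)) := by
    refine HasDerivAt.of_local_left_inverse hkfcont ?_ hcne hinv₂
    rw [hkf0]; exact hδfd
  -- little-o for kf
  have hkfo : (fun δ => kf δ - (δ - stdN (a₀/2)) * c⁻¹)
      =o[nhds (stdN (a₀/2))] (fun δ => δ - stdN (a₀/2)) := by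
    have := hasDerivAt_iff_isLittleO.1 hkfd
    simpa [hkf0, smul_eq_mul] using this
  -- kf = O(δ - δ₀)
  have hkfO : (fun δ => kf δ) =O[nhds (stdN (a₀/2))] (fun δ => δ - stdN (a₀/2)) := by
    have h1 : (fun δ => (δ - stdN (a₀/2)) * c⁻¹) =O[nhds (stdN (a₀/2))]
        (fun δ => δ - stdN (a₀/2)) := by
      simpa [mul_comm] using
        (isBigO_refl (fun δ : ℝ => δ - stdN (a₀/2)) (nhds (stdN (a₀/2)))).const_mul_left c⁻¹
    have heq : (fun δ => kf δ) =
        fun δ => (kf δ - (δ - stdN (a₀/2)) * c⁻¹) + (δ - stdN (a₀/2)) * c⁻¹ := by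
      funext δ; ring
    rw [heq]
    exact hkfo.isBigO.add h1
  -- composing the smile expansion with kf
  have htend : Filter.Tendsto kf (nhds (stdN (a₀/2))) (nhds 0) := by
    simpa [hkf0] using hkfcont.tendsto
  have hcomp : (fun δ => σhat (kf δ) * Real.sqrt T - (a₀ + a₁ * kf δ))
      =o[nhds (stdN (a₀/2))] (fun δ => kf δ) := hexp.comp_tendsto htend
  have h1 : (fun δ => σhat (kf δ) * Real.sqrt T - (a₀ + a₁ * kf δ))
      =o[nhds (stdN (a₀/2))] (fun δ => δ - stdN (a₀/2)) := hcomp.trans_isBigO hkfO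
  have h2 : (fun δ => a₁ * (kf δ - (δ - stdN (a₀/2)) * c⁻¹))
      =o[nhds (stdN (a₀/2))] (fun δ => δ - stdN (a₀/2)) := hkfo.const_mul_left a₁
  -- coefficient identity
  have h2ne : (2 : ℝ) - a₀ * a₁ ≠ 0 := fun h => hne (by linarith)
  have hbne : b ≠ 0 := by
    intro h
    apply hne
    rw [hb] at h
    field_simp at h
    linarith
  have hn : stdn (a₀/2) ≠ 0 := (stdn_pos (a₀/2)).ne'
  have hXne : stdn (a₀/2) * (a₀ * a₁ - 2) ≠ 0 :=
    mul_ne_zero hn (fun h => hne (by linarith))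
  have hc2 : c = stdn (a₀/2) * (a₀ * a₁ - 2) / (2 * a₀) := by
    rw [hc, hb]
    have h2 : a₀ ≠ 0 := ha₀.ne'
    field_simp
    try ring
    try simp
  have hcinv : c⁻¹ = (2 * a₀) / (stdn (a₀/2) * (a₀ * a₁ - 2)) := by
    rw [hc2, inv_div]
  have hC : 2 * a₀ * a₁ / (stdn (a₀ / 2) * (2 - a₀ * a₁)) = -(a₁ * c⁻¹) := by
    rw [hcinv, ← mul_div_assoc, ← neg_div,
      div_eq_div_iff (mul_ne_zero hn h2ne) hXne]
    ring
  have heq : (fun δ => σhat (kf δ) * Real.sqrt T -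
        (a₀ - (2 * a₀ * a₁ / (stdn (a₀ / 2) * (2 - a₀ * a₁))) * (δ - stdN (a₀ / 2)))) =
      fun δ => (σhat (kf δ) * Real.sqrt T - (a₀ + a₁ * kf δ)) +
        a₁ * (kf δ - (δ - stdN (a₀/2)) * c⁻¹) := by
    funext δ
    rw [hC]
    ring
  rw [heq]
  exact h1.add h2
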